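/- Let S be a finite nonempty type, P : S → S → ℝ a row-stochastic irreducible matrix with stationary distribution μ, R : S → S → ℝ with |R i j| ≤ Rmax, D : S → S → ℝ with 0 ≤ D i j ≤ Dmax (Dmax ≥ 1), and assume there exist i₀, j₀ with P i₀ j₀ > 0 and D i₀ j₀ > 0. Then there exist constants C > 0 and H₀ > 1 such that for every real H ≥ H₀ and every stationary distribution μ'_H of the probabilistic-termination matrix P'_H on Option S: |Σ_i R̂ i · μ i − Σ_i R̂'_H i · μ'_H (some i)| ≤ C / H and |Σ_i D̂ i · μ i − Σ_i D̂'_H i · μ'_H (some i)| ≤ C / H. -/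

import Mathlib

open Finset Filter MeasureTheory ProbabilityTheory

/-- A matrix is row-stochastic if all entries are nonnegative and every row sums to 1. -/
def RowStochastic {S : Type*} [Fintype S] (P : S → S → ℝ) : Prop :=
  (∀ i j, 0 ≤ P i j) ∧ ∀ i, ∑ j, P i j = 1

/-- A matrix is irreducible if for all `i, j` there exists `n ≥ 1` with `(P ^ n) i j > 0`. -/
def MatIrreducible {S : Type*} [Fintype S] [DecidableEq S] (P : S → S → ℝ) : Prop :=
  ∀ i j, ∃ n, 1 ≤ n ∧ 0 < ((Matrix.of P) ^ n) i j

/-- A stationary distribution of a matrix `Q`. -/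
def MatIsStationary {T : Type*} [Fintype T] (Q : T → T → ℝ) (ν : T → ℝ) : Prop :=
  (∀ i, 0 ≤ ν i) ∧ (∑ i, ν i = 1) ∧ ∀ j, ∑ i, ν i * Q i j = ν j

/-- The probabilistic-termination matrix `P'_H` on `Option S`, with terminal state `none`
and restart state `s₀`. -/
noncomputable def PTMatrix {S : Type*} [Fintype S] [DecidableEq S]
    (P D : S → S → ℝ) (H : ℝ) (s₀ : S) : Option S → Option S → ℝ
  | some i, some j => (1 - 1 / H) ^ (D i j) * P i j
  | some i, none => ∑ j, (1 - (1 - 1 / H) ^ (D i j)) * P i j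
  | none, some j => if j = s₀ then 1 else 0
  | none, none => 0

/-- Expected one-step reward `R̂ i = ∑ j, R i j * P i j`. -/
noncomputable def Rhat {S : Type*} [Fintype S] (P R : S → S → ℝ) (i : S) : ℝ :=
  ∑ j, R i j * P i j

/-- Expected one-step difficulty contribution `D̂ i = ∑ j, D i j * P i j`. -/
noncomputable def Dhat {S : Type*} [Fintype S] (P D : S → S → ℝ) (i : S) : ℝ :=
  ∑ j, D i j * P i j

/-- Expected one-step reward in the probabilistically terminating chain. -/
noncomputable def RhatPT {S : Type*} [Fintype S] (P R D : S → S → ℝ) (H : ℝ) (i : S) : ℝ :=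
  ∑ j, R i j * ((1 - 1 / H) ^ (D i j) * P i j)

/-- Expected one-step difficulty contribution in the probabilistically terminating chain. -/
noncomputable def DhatPT {S : Type*} [Fintype S] (P D : S → S → ℝ) (H : ℝ) (i : S) : ℝ :=
  ∑ j, D i j * ((1 - 1 / H) ^ (D i j) * P i j)

section Auxiliary

variable {S : Type*} [Fintype S] [DecidableEq S]

lemma matpow_nonneg (P : S → S → ℝ) (hP : ∀ i j, 0 ≤ P i j) :
    ∀ n i j, 0 ≤ ((Matrix.of P) ^ n) i j := by
  intro n
  induction n with
  | zero => intro i j; simp [Matrix.one_apply]; split <;> norm_num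
  | succ n ih =>
      intro i j
      rw [pow_succ, Matrix.mul_apply]
      exact Finset.sum_nonneg fun k _ => mul_nonneg (ih i k) (hP k j)

lemma left_fixed_pow (P : S → S → ℝ) {x : S → ℝ}
    (hx : ∀ j, ∑ i, x i * P i j = x j) :
    ∀ n j, ∑ i, x i * ((Matrix.of P) ^ n) i j = x j := by
  intro n
  induction n with
  | zero => intro j; simp [Matrix.one_apply, mul_ite]
  | succ n ih =>
      intro j
      rw [pow_succ]
      simp only [Matrix.mul_apply]
      calc ∑ i, x i * ∑ k, ((Matrix.of P) ^ n) i k * (Matrix.of P) k j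
          = ∑ k, (∑ i, x i * ((Matrix.of P) ^ n) i k) * (Matrix.of P) k j := by
            simp_rw [Finset.mul_sum, Finset.sum_mul, mul_assoc]
            rw [Finset.sum_comm]
        _ = ∑ k, x k * P k j := by simp_rw [ih]; rfl
        _ = x j := hx j

lemma nonneg_fixed_all_zero (P : S → S → ℝ) (hP : RowStochastic P) (hirr : MatIrreducible P)
    {y : S → ℝ} (hy0 : ∀ i, 0 ≤ y i) (hfix : ∀ j, ∑ i, y i * P i j = y j)
    {i : S} (hyi : y i = 0) : ∀ j, y j = 0 := by
  intro j
  obtain ⟨n, _, hn⟩ := hirr j i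
  have h := left_fixed_pow P hfix n i
  have hterm : ∀ k ∈ Finset.univ, 0 ≤ y k * ((Matrix.of P) ^ n) k i :=
    fun k _ => mul_nonneg (hy0 k) (matpow_nonneg P hP.1 n k i)
  have hz := (Finset.sum_eq_zero_iff_of_nonneg hterm).mp (by rw [h, hyi]) j (Finset.mem_univ j)
  rcases mul_eq_zero.mp hz with h' | h'
  · exact h'
  · exact absurd h' (ne_of_gt hn)

lemma kernel_trivial [Nonempty S] (P : S → S → ℝ) (hP : RowStochastic P)
    (hirr : MatIrreducible P) {x : S → ℝ}
    (hfix : ∀ j, ∑ i, x i * P i j = x j) (hsum : ∑ i, x i = 0) : ∀ i, x i = 0 := by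
  obtain ⟨hP0, hP1⟩ := hP
  have habs_le : ∀ j, |x j| ≤ ∑ i, |x i| * P i j := by
    intro j
    rw [← hfix j]
    calc |∑ i, x i * P i j| ≤ ∑ i, |x i * P i j| := Finset.abs_sum_le_sum_abs _ _
      _ = ∑ i, |x i| * P i j := by
          apply Finset.sum_congr rfl; intro i _
          rw [abs_mul, abs_of_nonneg (hP0 i j)]
  have hsums : ∑ j, ((∑ i, |x i| * P i j) - |x j|) = 0 := by
    rw [Finset.sum_sub_distrib, Finset.sum_comm]
    simp_rw [← Finset.mul_sum, hP1, mul_one]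
    ring
  have habs : ∀ j, ∑ i, |x i| * P i j = |x j| := by
    intro j
    have := (Finset.sum_eq_zero_iff_of_nonneg
      (fun j _ => sub_nonneg.mpr (habs_le j))).mp hsums j (Finset.mem_univ j)
    linarith
  set p : S → ℝ := fun i => (|x i| + x i) / 2 with hpdef
  have hpfix : ∀ j, ∑ i, p i * P i j = p j := by
    intro j
    have : ∑ i, p i * P i j
        = ((∑ i, |x i| * P i j) + ∑ i, x i * P i j) / 2 := by
      rw [← Finset.sum_add_distrib, Finset.sum_div]
      apply Finset.sum_congr rfl; intro i _; simp [hpdef]; ring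
    rw [this, habs j, hfix j]
  have hp0 : ∀ i, 0 ≤ p i := by
    intro i
    have := neg_abs_le (x i)
    simp only [hpdef]
    linarith
  by_cases hz : ∃ i, p i = 0
  · obtain ⟨i, hi⟩ := hz
    have hall := nonneg_fixed_all_zero P ⟨hP0, hP1⟩ hirr hp0 hpfix hi
    have hxle : ∀ k, x k ≤ 0 := by
      intro k
      have hk := hall k
      simp only [hpdef] at hk
      have := abs_nonneg (x k)
      have hax : |x k| + x k = 0 := by linarith
      linarith [le_abs_self (x k)]
    intro k
    exact (Finset.sum_eq_zero_iff_of_nonpos (fun k _ => hxle k)).mp hsum k (Finset.mem_univ k)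
  · push_neg at hz
    exfalso
    have hxpos : ∀ i, 0 < x i := by
      intro i
      rcases le_or_gt (x i) 0 with h | h
      · exact absurd (by simp [hpdef, abs_of_nonpos h] : p i = 0) (hz i)
      · exact h
    have : 0 < ∑ i, x i := Finset.sum_pos (fun i _ => hxpos i) Finset.univ_nonempty
    linarith

/-- The linear map `x ↦ (x - xP, ∑ x)`. -/
noncomputable def PhiMap (P : S → S → ℝ) : (S → ℝ) →ₗ[ℝ] (S → ℝ) × ℝ where
  toFun := fun x => (fun j => x j - ∑ i, x i * P i j, ∑ i, x i)
  map_add' := by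
    intro x y
    refine Prod.ext ?_ ?_
    · funext j
      simp [add_mul, Finset.sum_add_distrib]
      ring
    · simp [Finset.sum_add_distrib]
  map_smul' := by
    intro a x
    refine Prod.ext ?_ ?_
    · funext j
      simp [smul_eq_mul, mul_assoc, Finset.mul_sum, mul_sub]
    · simp [smul_eq_mul, Finset.mul_sum]

lemma phiMap_bound (P : S → S → ℝ)
    (hker : ∀ x : S → ℝ, PhiMap P x = 0 → x = 0) :
    ∃ c : ℝ, 0 ≤ c ∧ ∀ x : S → ℝ, ‖x‖ ≤ c * ‖PhiMap P x‖ := by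
  have hker' : LinearMap.ker (PhiMap P) = ⊥ := by
    rw [LinearMap.ker_eq_bot']
    exact hker
  obtain ⟨g, hg⟩ := (PhiMap P).exists_leftInverse_of_injective hker'
  set G := LinearMap.toContinuousLinearMap g with hG
  refine ⟨‖G‖, norm_nonneg _, ?_⟩
  intro x
  have hx : g (PhiMap P x) = x := by
    rw [← LinearMap.comp_apply, hg, LinearMap.id_apply]
  calc ‖x‖ = ‖G (PhiMap P x)‖ := by
        rw [show G (PhiMap P x) = g (PhiMap P x) from
          congrFun (LinearMap.coe_toContinuousLinearMap' g) _, hx]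
    _ ≤ ‖G‖ * ‖PhiMap P x‖ := G.le_opNorm _

end Auxiliary

/-- **Lemma 4.** The average reward per step and the average difficulty contribution per
step of the ARR chain and the PT chain agree up to `O(1/H)`. -/
theorem average_reward_and_difficulty_perturbation {S : Type*} [Fintype S] [Nonempty S]
    [DecidableEq S] (P R D : S → S → ℝ) (μ : S → ℝ) (Rmax Dmax : ℝ) (s₀ : S)
    (hP : RowStochastic P) (hirr : MatIrreducible P) (hμ : MatIsStationary P μ)
    (hR : ∀ i j, |R i j| ≤ Rmax)
    (hD0 : ∀ i j, 0 ≤ D i j) (hD1 : ∀ i j, D i j ≤ Dmax) (hDmax : 1 ≤ Dmax)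
    (hpos : ∃ i₀ j₀, 0 < P i₀ j₀ ∧ 0 < D i₀ j₀) :
    ∃ C > 0, ∃ H₀ > 1, ∀ H, H₀ ≤ H → ∀ μ' : Option S → ℝ,
      MatIsStationary (PTMatrix P D H s₀) μ' →
      |(∑ i, Rhat P R i * μ i) - ∑ i, RhatPT P R D H i * μ' (some i)| ≤ C / H ∧
        |(∑ i, Dhat P D i * μ i) - ∑ i, DhatPT P D H i * μ' (some i)| ≤ C / H := by
  classical
  obtain ⟨hP0, hP1⟩ := hP
  have hPle1 : ∀ i j, P i j ≤ 1 := by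
    intro i j
    calc P i j ≤ ∑ k, P i k := Finset.single_le_sum (fun k _ => hP0 i k) (Finset.mem_univ j)
      _ = 1 := hP1 i
  have hker : ∀ x : S → ℝ, PhiMap P x = 0 → x = 0 := by
    intro x hx
    have h1 : ∀ j, x j - ∑ i, x i * P i j = 0 := fun j => congrFun (congrArg Prod.fst hx) j
    have h2 : ∑ i, x i = 0 := congrArg Prod.snd hx
    funext i
    exact kernel_trivial P ⟨hP0, hP1⟩ hirr (fun j => by linarith [h1 j]) h2 i
  obtain ⟨c, hc0, hcb⟩ := phiMap_bound P hker
  have hR0 : 0 ≤ Rmax :=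
    le_trans (abs_nonneg _) (hR (Classical.arbitrary S) (Classical.arbitrary S))
  have hDm0 : (0:ℝ) < Dmax := lt_of_lt_of_le one_pos hDmax
  set M := max Rmax Dmax with hM
  have hM0 : 0 < M := lt_of_lt_of_le hDm0 (le_max_right _ _)
  set cardS := (Fintype.card S : ℝ) with hcard
  have hcard0 : (0:ℝ) ≤ cardS := Nat.cast_nonneg _
  have hC0 : 0 < (cardS * c + 1) * (M * Dmax) + 1 := by
    nlinarith [mul_nonneg hcard0 hc0, mul_pos hM0 hDm0,
      mul_nonneg (mul_nonneg hcard0 hc0) (mul_pos hM0 hDm0).le]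
  refine ⟨(cardS * c + 1) * (M * Dmax) + 1, hC0, 2, one_lt_two, ?_⟩
  intro H hH μ' hμ'
  have hH0 : (0:ℝ) < H := lt_of_lt_of_le two_pos hH
  have hinvH : 1 / H ≤ 1 / 2 := by
    apply one_div_le_one_div_of_le two_pos hH
  have hinvH0 : 0 < 1 / H := by positivity
  have hx0 : (0:ℝ) < 1 - 1 / H := by linarith
  have hx1 : 1 - 1 / H ≤ 1 := by linarith
  have hpow01 : ∀ i j, 0 ≤ (1 - 1 / H) ^ (D i j) ∧ (1 - 1 / H) ^ (D i j) ≤ 1 := fun i j =>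
    ⟨Real.rpow_nonneg hx0.le _, Real.rpow_le_one hx0.le hx1 (hD0 i j)⟩
  have hpow_ge : ∀ i j, 1 - Dmax / H ≤ (1 - 1 / H) ^ (D i j) := by
    intro i j
    have h1 : (1 - 1 / H) ^ (Dmax) ≤ (1 - 1 / H) ^ (D i j) :=
      Real.rpow_le_rpow_of_exponent_ge hx0 hx1 (hD1 i j)
    have h2 : 1 + Dmax * (-(1 / H)) ≤ (1 + -(1 / H)) ^ Dmax :=
      one_add_mul_self_le_rpow_one_add (by linarith) hDmax
    have h3 : (1 + -(1 / H) : ℝ) = 1 - 1 / H := by ring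
    rw [h3] at h2
    calc 1 - Dmax / H = 1 + Dmax * (-(1 / H)) := by ring
      _ ≤ (1 - 1 / H) ^ Dmax := h2
      _ ≤ _ := h1
  have hfac : ∀ i j, 0 ≤ 1 - (1 - 1 / H) ^ (D i j) ∧ 1 - (1 - 1 / H) ^ (D i j) ≤ Dmax / H :=
    fun i j => ⟨by linarith [(hpow01 i j).2], by linarith [hpow_ge i j]⟩
  obtain ⟨hν0, hνsum, hνfix⟩ := hμ'
  have ht0 : 0 ≤ μ' none := hν0 none
  have hsum1 : μ' none + ∑ i, μ' (some i) = 1 := by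
    rw [← hνsum, Fintype.sum_option]
  have hνle1 : ∑ i, μ' (some i) ≤ 1 := by linarith
  have hDH0 : 0 ≤ Dmax / H := by positivity
  have hstat_none : ∑ i, μ' (some i) * (∑ j, (1 - (1 - 1 / H) ^ (D i j)) * P i j) = μ' none := by
    have h := hνfix none
    rw [Fintype.sum_option] at h
    simpa [PTMatrix] using h
  have hk_le : ∀ i, ∑ j, (1 - (1 - 1 / H) ^ (D i j)) * P i j ≤ Dmax / H := by
    intro i
    calc ∑ j, (1 - (1 - 1 / H) ^ (D i j)) * P i j
        ≤ ∑ j, (Dmax / H) * P i j :=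
          Finset.sum_le_sum fun j _ => mul_le_mul_of_nonneg_right (hfac i j).2 (hP0 i j)
      _ = Dmax / H := by rw [← Finset.mul_sum, hP1 i, mul_one]
  have ht_le : μ' none ≤ Dmax / H := by
    rw [← hstat_none]
    calc ∑ i, μ' (some i) * (∑ j, (1 - (1 - 1 / H) ^ (D i j)) * P i j)
        ≤ ∑ i, μ' (some i) * (Dmax / H) :=
          Finset.sum_le_sum fun i _ => mul_le_mul_of_nonneg_left (hk_le i) (hν0 _)
      _ = (∑ i, μ' (some i)) * (Dmax / H) := by rw [Finset.sum_mul]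
      _ ≤ 1 * (Dmax / H) := mul_le_mul_of_nonneg_right hνle1 hDH0
      _ = Dmax / H := one_mul _
  have hstat_some : ∀ j, (∑ i, μ' (some i) * ((1 - 1 / H) ^ (D i j) * P i j))
      + μ' none * (if j = s₀ then 1 else 0) = μ' (some j) := by
    intro j
    have h := hνfix (some j)
    rw [Fintype.sum_option] at h
    simpa [PTMatrix, add_comm] using h
  set δ : S → ℝ := fun i => μ' (some i) - μ i with hδ
  have hcomp1 : ∀ j, |δ j - ∑ i, δ i * P i j| ≤ Dmax / H := by
    intro j
    have hμj := hμ.2.2 j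
    have hsj := hstat_some j
    have hsplit : ∑ i, δ i * P i j = (∑ i, μ' (some i) * P i j) - ∑ i, μ i * P i j := by
      simp only [hδ, sub_mul]
      rw [Finset.sum_sub_distrib]
    have hexp : ∑ i, μ' (some i) * ((1 - (1 - 1 / H) ^ (D i j)) * P i j)
        = (∑ i, μ' (some i) * P i j) - ∑ i, μ' (some i) * ((1 - 1 / H) ^ (D i j) * P i j) := by
      rw [← Finset.sum_sub_distrib]
      apply Finset.sum_congr rfl; intro i _; ring
    have hid : δ j - ∑ i, δ i * P i j
        = μ' none * (if j = s₀ then 1 else 0)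
          - ∑ i, μ' (some i) * ((1 - (1 - 1 / H) ^ (D i j)) * P i j) := by
      rw [hsplit, hexp, hμj]
      simp only [hδ]
      linarith [hsj]
    rw [hid]
    have hb1 : 0 ≤ μ' none * (if j = s₀ then 1 else 0) :=
      mul_nonneg ht0 (by split <;> norm_num)
    have hb2 : μ' none * (if j = s₀ then 1 else 0) ≤ Dmax / H := by
      calc μ' none * (if j = s₀ then 1 else 0) ≤ μ' none * 1 :=
            mul_le_mul_of_nonneg_left (by split <;> norm_num) ht0
        _ = μ' none := mul_one _
        _ ≤ Dmax / H := ht_le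
    have hb3 : 0 ≤ ∑ i, μ' (some i) * ((1 - (1 - 1 / H) ^ (D i j)) * P i j) :=
      Finset.sum_nonneg fun i _ => mul_nonneg (hν0 _) (mul_nonneg (hfac i j).1 (hP0 i j))
    have hb4 : ∑ i, μ' (some i) * ((1 - (1 - 1 / H) ^ (D i j)) * P i j) ≤ Dmax / H := by
      calc ∑ i, μ' (some i) * ((1 - (1 - 1 / H) ^ (D i j)) * P i j)
          ≤ ∑ i, μ' (some i) * (Dmax / H) := by
            apply Finset.sum_le_sum
            intro i _
            apply mul_le_mul_of_nonneg_left _ (hν0 _)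
            calc (1 - (1 - 1 / H) ^ (D i j)) * P i j ≤ (Dmax / H) * P i j :=
                  mul_le_mul_of_nonneg_right (hfac i j).2 (hP0 i j)
              _ ≤ (Dmax / H) * 1 := mul_le_mul_of_nonneg_left (hPle1 i j) hDH0
              _ = Dmax / H := mul_one _
        _ = (∑ i, μ' (some i)) * (Dmax / H) := by rw [Finset.sum_mul]
        _ ≤ 1 * (Dmax / H) := mul_le_mul_of_nonneg_right hνle1 hDH0
        _ = Dmax / H := one_mul _
    rw [abs_le]
    constructor <;> linarith
  have hcomp2 : |∑ i, δ i| ≤ Dmax / H := by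
    have h : ∑ i, δ i = -(μ' none) := by
      simp only [hδ]
      rw [Finset.sum_sub_distrib, hμ.2.1]
      linarith
    rw [h, abs_neg, abs_of_nonneg ht0]
    exact ht_le
  have hΦδ : ‖PhiMap P δ‖ ≤ Dmax / H := by
    rw [Prod.norm_def]
    apply max_le
    · rw [pi_norm_le_iff_of_nonneg hDH0]
      intro j
      rw [Real.norm_eq_abs]
      exact hcomp1 j
    · rw [Real.norm_eq_abs]
      exact hcomp2
  have hδb : ∀ i, |δ i| ≤ c * (Dmax / H) := by
    intro i
    have h1 : ‖δ‖ ≤ c * (Dmax / H) :=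
      le_trans (hcb δ) (mul_le_mul_of_nonneg_left hΦδ hc0)
    calc |δ i| = ‖δ i‖ := (Real.norm_eq_abs _).symm
      _ ≤ ‖δ‖ := norm_le_pi_norm δ i
      _ ≤ _ := h1
  have key : ∀ (F : S → S → ℝ) (Mf : ℝ), 0 ≤ Mf → Mf ≤ M → (∀ i j, |F i j| ≤ Mf) →
      |(∑ i, (∑ j, F i j * P i j) * μ i)
        - ∑ i, (∑ j, F i j * ((1 - 1 / H) ^ (D i j) * P i j)) * μ' (some i)|
        ≤ ((cardS * c + 1) * (M * Dmax) + 1) / H := by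
    intro F Mf hMf0 hMfM hF
    have hFhat : ∀ i, |∑ j, F i j * P i j| ≤ Mf := by
      intro i
      calc |∑ j, F i j * P i j| ≤ ∑ j, |F i j * P i j| := Finset.abs_sum_le_sum_abs _ _
        _ ≤ ∑ j, Mf * P i j := by
            apply Finset.sum_le_sum
            intro j _
            rw [abs_mul, abs_of_nonneg (hP0 i j)]
            exact mul_le_mul_of_nonneg_right (hF i j) (hP0 i j)
        _ = Mf := by rw [← Finset.mul_sum, hP1 i, mul_one]
    have hdiff : ∀ i, |(∑ j, F i j * P i j) - ∑ j, F i j * ((1 - 1 / H) ^ (D i j) * P i j)|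
        ≤ Mf * (Dmax / H) := by
      intro i
      have hre : (∑ j, F i j * P i j) - ∑ j, F i j * ((1 - 1 / H) ^ (D i j) * P i j)
          = ∑ j, F i j * ((1 - (1 - 1 / H) ^ (D i j)) * P i j) := by
        rw [← Finset.sum_sub_distrib]
        apply Finset.sum_congr rfl; intro j _; ring
      rw [hre]
      calc |∑ j, F i j * ((1 - (1 - 1 / H) ^ (D i j)) * P i j)|
          ≤ ∑ j, |F i j * ((1 - (1 - 1 / H) ^ (D i j)) * P i j)| :=
            Finset.abs_sum_le_sum_abs _ _
        _ ≤ ∑ j, Mf * ((Dmax / H) * P i j) := by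
            apply Finset.sum_le_sum
            intro j _
            rw [abs_mul, abs_of_nonneg (mul_nonneg (hfac i j).1 (hP0 i j))]
            exact mul_le_mul (hF i j)
              (mul_le_mul_of_nonneg_right (hfac i j).2 (hP0 i j))
              (mul_nonneg (hfac i j).1 (hP0 i j)) hMf0
        _ = Mf * (Dmax / H) := by
            simp_rw [← Finset.mul_sum]
            rw [hP1 i, mul_one]
    have hsplit : (∑ i, (∑ j, F i j * P i j) * μ i)
        - ∑ i, (∑ j, F i j * ((1 - 1 / H) ^ (D i j) * P i j)) * μ' (some i)
        = (∑ i, (∑ j, F i j * P i j) * (μ i - μ' (some i)))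
          + ∑ i, ((∑ j, F i j * P i j)
              - ∑ j, F i j * ((1 - 1 / H) ^ (D i j) * P i j)) * μ' (some i) := by
      rw [← Finset.sum_add_distrib, ← Finset.sum_sub_distrib]
      apply Finset.sum_congr rfl; intro i _; ring
    rw [hsplit]
    have hterm1 : |∑ i, (∑ j, F i j * P i j) * (μ i - μ' (some i))|
        ≤ cardS * (Mf * (c * (Dmax / H))) := by
      calc |∑ i, (∑ j, F i j * P i j) * (μ i - μ' (some i))|
          ≤ ∑ i, |(∑ j, F i j * P i j) * (μ i - μ' (some i))| :=
            Finset.abs_sum_le_sum_abs _ _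
        _ ≤ ∑ i, Mf * (c * (Dmax / H)) := by
            apply Finset.sum_le_sum
            intro i _
            rw [abs_mul]
            have h2 : |μ i - μ' (some i)| ≤ c * (Dmax / H) := by
              have h3 := hδb i
              have h4 : μ i - μ' (some i) = -(δ i) := by simp only [hδ]; ring
              rw [h4, abs_neg]
              exact h3
            exact mul_le_mul (hFhat i) h2 (abs_nonneg _) hMf0
        _ = cardS * (Mf * (c * (Dmax / H))) := by
            rw [Finset.sum_const, Finset.card_univ, nsmul_eq_mul, hcard]
    have hterm2 : |∑ i, ((∑ j, F i j * P i j)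
        - ∑ j, F i j * ((1 - 1 / H) ^ (D i j) * P i j)) * μ' (some i)|
        ≤ Mf * (Dmax / H) := by
      calc |∑ i, ((∑ j, F i j * P i j)
            - ∑ j, F i j * ((1 - 1 / H) ^ (D i j) * P i j)) * μ' (some i)|
          ≤ ∑ i, |((∑ j, F i j * P i j)
              - ∑ j, F i j * ((1 - 1 / H) ^ (D i j) * P i j)) * μ' (some i)| :=
            Finset.abs_sum_le_sum_abs _ _
        _ ≤ ∑ i, (Mf * (Dmax / H)) * μ' (some i) := by
            apply Finset.sum_le_sum
            intro i _
            rw [abs_mul, abs_of_nonneg (hν0 (some i))]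
            exact mul_le_mul_of_nonneg_right (hdiff i) (hν0 (some i))
        _ = (Mf * (Dmax / H)) * ∑ i, μ' (some i) := by rw [Finset.mul_sum]
        _ ≤ (Mf * (Dmax / H)) * 1 :=
            mul_le_mul_of_nonneg_left hνle1 (mul_nonneg hMf0 hDH0)
        _ = Mf * (Dmax / H) := mul_one _
    have hfinal : cardS * (Mf * (c * (Dmax / H))) + Mf * (Dmax / H)
        ≤ ((cardS * c + 1) * (M * Dmax) + 1) / H := by
      have heq : cardS * (Mf * (c * (Dmax / H))) + Mf * (Dmax / H)
          = (cardS * c * (Mf * Dmax) + Mf * Dmax) / H := by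
        field_simp
      rw [heq, div_le_div_iff₀ hH0 hH0]
      have h5 : Mf * Dmax ≤ M * Dmax := mul_le_mul_of_nonneg_right hMfM hDm0.le
      have h6 : cardS * c * (Mf * Dmax) ≤ cardS * c * (M * Dmax) :=
        mul_le_mul_of_nonneg_left h5 (mul_nonneg hcard0 hc0)
      nlinarith [mul_nonneg hcard0 hc0]
    calc |(∑ i, (∑ j, F i j * P i j) * (μ i - μ' (some i)))
          + ∑ i, ((∑ j, F i j * P i j)
              - ∑ j, F i j * ((1 - 1 / H) ^ (D i j) * P i j)) * μ' (some i)|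
        ≤ |∑ i, (∑ j, F i j * P i j) * (μ i - μ' (some i))|
          + |∑ i, ((∑ j, F i j * P i j)
              - ∑ j, F i j * ((1 - 1 / H) ^ (D i j) * P i j)) * μ' (some i)| := abs_add_le _ _
      _ ≤ cardS * (Mf * (c * (Dmax / H))) + Mf * (Dmax / H) := add_le_add hterm1 hterm2
      _ ≤ ((cardS * c + 1) * (M * Dmax) + 1) / H := hfinal
  constructor
  · have h := key R Rmax hR0 (le_max_left _ _) hR
    simpa [Rhat, RhatPT] using h
  · have h := key D Dmax hDm0.le (le_max_right _ _)
      (fun i j => by rw [abs_of_nonneg (hD0 i j)]; exact hD1 i j)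
    simpa [Dhat, DhatPT] using h
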